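/- Let β > 0, K > 0 and z̃ ∈ (−1,1). If z̃ is a local minimum point of G_{β,K} with G_{β,K}″(z̃) > 0, then z̃ is a local minimum point of I_{β,K} with I_{β,K}″(z̃) > 0; conversely, if z̃ is a local minimum point of I_{β,K} with I_{β,K}″(z̃) > 0, then z̃ is a local minimum point of G_{β,K} with G_{β,K}″(z̃) > 0. (In particular, under strict convexity at the minimum points, the local minimum points of G_{β,K} and of I_{β,K} coincide.) -/

import Mathlib

noncomputable section

/-- Cumulant generating function
`c_β(t) = log[(1 + e^{−β}(e^t + e^{−t}))/(1 + 2e^{−β})]`. -/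
def cBC (β t : ℝ) : ℝ :=
  Real.log ((1 + Real.exp (-β) * (Real.exp t + Real.exp (-t))) / (1 + 2 * Real.exp (-β)))

/-- Legendre–Fenchel transform `J_β(z) = sup_t {tz − c_β(t)}` (finite on `[-1,1]`). -/
def JBC (β z : ℝ) : ℝ := ⨆ t : ℝ, (t * z - cBC β t)

/-- Free energy functional `G_{β,K}(z) = βKz² − c_β(2βKz)`. -/
def GBC (β K z : ℝ) : ℝ := β * K * z ^ 2 - cBC β (2 * β * K * z)

/-- Rate function `I_{β,K}(z) = J_β(z) − βKz² − inf_y {J_β(y) − βKy²}` (the infimum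
over `ℝ` equals the infimum over `[-1,1]` since `J_β = +∞` off `[-1,1]`). -/
def IBC (β K z : ℝ) : ℝ :=
  JBC β z - β * K * z ^ 2 -
    sInf ((fun y => JBC β y - β * K * y ^ 2) '' Set.Icc (-1 : ℝ) 1)

namespace BCaux

def EE (β : ℝ) : ℝ := Real.exp (-β)

def Nf (β t : ℝ) : ℝ := 1 + EE β * (Real.exp t + Real.exp (-t))

def c1 (β t : ℝ) : ℝ := EE β * (Real.exp t - Real.exp (-t)) / Nf β t

def c2 (β t : ℝ) : ℝ := (EE β * (Real.exp t + Real.exp (-t)) + 4 * (EE β)^2) / (Nf β t)^2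

lemma EE_pos (β : ℝ) : 0 < EE β := Real.exp_pos _

lemma Nf_pos (β t : ℝ) : 0 < Nf β t := by
  have h1 := (EE_pos β).le
  have h2 := (Real.exp_pos t).le
  have h3 := (Real.exp_pos (-t)).le
  unfold Nf
  nlinarith

lemma cBC_eq (β t : ℝ) : cBC β t = Real.log (Nf β t) - Real.log (1 + 2 * EE β) := by
  unfold cBC Nf EE
  have h1 : (0:ℝ) < 1 + Real.exp (-β) * (Real.exp t + Real.exp (-t)) := by positivity
  have h2 : (0:ℝ) < 1 + 2 * Real.exp (-β) := by positivity
  rw [Real.log_div h1.ne' h2.ne']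

lemma hasDerivAt_Nf (β t : ℝ) :
    HasDerivAt (Nf β) (EE β * (Real.exp t - Real.exp (-t))) t := by
  have h1 : HasDerivAt (fun t : ℝ => Real.exp t) (Real.exp t) t := Real.hasDerivAt_exp t
  have h2 : HasDerivAt (fun t : ℝ => Real.exp (-t)) (-Real.exp (-t)) t := by
    have h := (hasDerivAt_neg t).exp
    rw [mul_neg_one] at h
    exact h
  have := ((h1.add h2).const_mul (EE β)).const_add 1
  have heq : EE β * (Real.exp t + -Real.exp (-t)) = EE β * (Real.exp t - Real.exp (-t)) := by ring
  rw [heq] at this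
  exact this

lemma hasDerivAt_cBC (β t : ℝ) : HasDerivAt (cBC β) (c1 β t) t := by
  have h := (hasDerivAt_Nf β t).log (Nf_pos β t).ne'
  have : HasDerivAt (fun t => Real.log (Nf β t) - Real.log (1 + 2 * EE β))
      (EE β * (Real.exp t - Real.exp (-t)) / Nf β t) t := h.sub_const _
  have heq : (fun t => Real.log (Nf β t) - Real.log (1 + 2 * EE β)) = cBC β := by
    funext s; rw [cBC_eq]
  rw [heq] at this
  exact this

lemma exp_mul_exp_neg (t : ℝ) : Real.exp t * Real.exp (-t) = 1 := by
  rw [← Real.exp_add]; simp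

lemma hasDerivAt_c1 (β t : ℝ) : HasDerivAt (c1 β) (c2 β t) t := by
  have hN := hasDerivAt_Nf β t
  have h1 : HasDerivAt (fun t : ℝ => Real.exp t) (Real.exp t) t := Real.hasDerivAt_exp t
  have h2 : HasDerivAt (fun t : ℝ => Real.exp (-t)) (-Real.exp (-t)) t := by
    have h := (hasDerivAt_neg t).exp
    rw [mul_neg_one] at h
    exact h
  have hnum : HasDerivAt (fun t => EE β * (Real.exp t - Real.exp (-t)))
      (EE β * (Real.exp t + Real.exp (-t))) t := by
    have := (h1.sub h2).const_mul (EE β)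
    have heq : EE β * (Real.exp t - -Real.exp (-t)) = EE β * (Real.exp t + Real.exp (-t)) := by ring
    rwa [heq] at this
  have h := hnum.div hN (Nf_pos β t).ne'
  refine h.congr_deriv ?_
  have hprod := exp_mul_exp_neg t
  have hnumeq : EE β * (Real.exp t + Real.exp (-t)) + 4 * (EE β)^2 =
      EE β * (Real.exp t + Real.exp (-t)) * Nf β t -
        EE β * (Real.exp t - Real.exp (-t)) * (EE β * (Real.exp t - Real.exp (-t))) := by
    unfold Nf
    linear_combination (-4*(EE β)^2) * hprod
  unfold c2
  rw [hnumeq]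

lemma c2_pos (β t : ℝ) : 0 < c2 β t := by
  have := EE_pos β
  have := Real.exp_pos t
  have := Real.exp_pos (-t)
  have := Nf_pos β t
  have h5 := (Nf_pos β t)
  unfold c2
  positivity

lemma c1_strictMono (β : ℝ) : StrictMono (c1 β) := by
  apply strictMono_of_deriv_pos
  intro t
  rw [(hasDerivAt_c1 β t).deriv]
  exact c2_pos β t

def qf (β z : ℝ) : ℝ := z^2 + 4*(EE β)^2*(1-z^2)

def tstar (β z : ℝ) : ℝ :=
  Real.log ((z + Real.sqrt (qf β z)) / (2 * EE β * (1-z)))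

lemma qf_pos (β : ℝ) {z : ℝ} (hz : z ∈ Set.Ioo (-1:ℝ) 1) : 0 < qf β z := by
  have h1 : (0:ℝ) < 1 - z^2 := by nlinarith [hz.1, hz.2]
  have h2 := EE_pos β
  unfold qf
  positivity

lemma num_pos (β : ℝ) {z : ℝ} (hz : z ∈ Set.Ioo (-1:ℝ) 1) :
    0 < z + Real.sqrt (qf β z) := by
  have hq := qf_pos β hz
  have hs : Real.sqrt (qf β z) ^ 2 = qf β z := Real.sq_sqrt hq.le
  have hsnn : 0 ≤ Real.sqrt (qf β z) := Real.sqrt_nonneg _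
  have h1 : (0:ℝ) < 1 - z^2 := by nlinarith [hz.1, hz.2]
  have h2 := EE_pos β
  have hc : 0 < 4*(EE β)^2*(1-z^2) := by positivity
  have hs' : Real.sqrt (qf β z) ^ 2 = z^2 + 4*(EE β)^2*(1-z^2) := by
    rw [hs]; unfold qf; ring
  nlinarith [hs', hsnn, hc, sq_nonneg (z + Real.sqrt (qf β z))]

lemma den_pos (β : ℝ) {z : ℝ} (hz : z ∈ Set.Ioo (-1:ℝ) 1) :
    0 < 2 * EE β * (1-z) := by
  have := EE_pos β
  have := hz.2
  nlinarith

lemma exp_tstar (β : ℝ) {z : ℝ} (hz : z ∈ Set.Ioo (-1:ℝ) 1) :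
    Real.exp (tstar β z) = (z + Real.sqrt (qf β z)) / (2 * EE β * (1-z)) := by
  unfold tstar
  exact Real.exp_log (div_pos (num_pos β hz) (den_pos β hz))

lemma quad_root (β : ℝ) {z : ℝ} (hz : z ∈ Set.Ioo (-1:ℝ) 1) :
    EE β * (1-z) * (Real.exp (tstar β z))^2 - z * Real.exp (tstar β z)
      - EE β * (1+z) = 0 := by
  have hq := qf_pos β hz
  have hs : Real.sqrt (qf β z) ^ 2 = qf β z := Real.sq_sqrt hq.le
  have hden := den_pos β hz
  have hs' : Real.sqrt (qf β z) ^ 2 = z^2 + 4*(EE β)^2*(1-z^2) := by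
    rw [hs]; unfold qf; ring
  rw [exp_tstar β hz]
  have hden := (den_pos β hz).ne'
  have hD2 : (2 * EE β * (1-z))^2 ≠ 0 := pow_ne_zero 2 hden
  rw [← mul_left_inj' hD2, zero_mul]
  have e1 : (z + Real.sqrt (qf β z))^2 / (2 * EE β * (1-z))^2 * (2 * EE β * (1-z))^2
      = (z + Real.sqrt (qf β z))^2 := div_mul_cancel₀ _ hD2
  have e2 : (z + Real.sqrt (qf β z)) / (2 * EE β * (1-z)) * (2 * EE β * (1-z))
      = (z + Real.sqrt (qf β z)) := div_mul_cancel₀ _ hden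
  rw [div_pow]
  linear_combination (EE β*(1-z)) * e1 - (z*(2 * EE β * (1-z))) * e2 + (EE β*(1-z)) * hs'

lemma c1_tstar (β : ℝ) {z : ℝ} (hz : z ∈ Set.Ioo (-1:ℝ) 1) :
    c1 β (tstar β z) = z := by
  set x := Real.exp (tstar β z) with hx
  have hxpos : 0 < x := Real.exp_pos _
  have hxn : Real.exp (-(tstar β z)) = 1/x := by
    rw [Real.exp_neg]; exact (one_div x).symm
  have hquad := quad_root β hz
  have hNpos := Nf_pos β (tstar β z)
  unfold c1
  rw [hxn, ← hx]
  unfold Nf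
  rw [hxn, ← hx]
  rw [div_eq_iff (by
    have hE := EE_pos β
    positivity)]
  field_simp
  nlinarith [hquad]

lemma hasDerivAt_phi (β z t : ℝ) :
    HasDerivAt (fun t => t * z - cBC β t) (z - c1 β t) t := by
  have h1 : HasDerivAt (fun t : ℝ => t * z) z t := by
    simpa using (hasDerivAt_id t).mul_const z
  exact h1.sub (hasDerivAt_cBC β t)

lemma phi_le (β : ℝ) {z : ℝ} (hz : z ∈ Set.Ioo (-1:ℝ) 1) (t : ℝ) :
    t * z - cBC β t ≤ tstar β z * z - cBC β (tstar β z) := by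
  set w := tstar β z with hw
  set φ := fun t => t * z - cBC β t with hφ
  have hφd : ∀ s : ℝ, HasDerivAt φ (z - c1 β s) s := fun s => hasDerivAt_phi β z s
  have hcw : c1 β w = z := c1_tstar β hz
  rcases le_total t w with h | h
  · have hmono : MonotoneOn φ (Set.Icc t w) := by
      apply monotoneOn_of_deriv_nonneg (convex_Icc _ _)
        (fun x _ => (hφd x).continuousAt.continuousWithinAt)
        (fun x hx => (hφd x).differentiableAt.differentiableWithinAt)
      intro x hx
      rw [interior_Icc] at hx
      rw [(hφd x).deriv]
      have : c1 β x < c1 β w := c1_strictMono β hx.2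
      rw [hcw] at this
      linarith
    exact hmono (Set.left_mem_Icc.2 h) (Set.right_mem_Icc.2 h) h
  · have hanti : AntitoneOn φ (Set.Icc w t) := by
      apply antitoneOn_of_deriv_nonpos (convex_Icc _ _)
        (fun x _ => (hφd x).continuousAt.continuousWithinAt)
        (fun x hx => (hφd x).differentiableAt.differentiableWithinAt)
      intro x hx
      rw [interior_Icc] at hx
      rw [(hφd x).deriv]
      have : c1 β w < c1 β x := c1_strictMono β hx.1
      rw [hcw] at this
      linarith
    exact hanti (Set.left_mem_Icc.2 h) (Set.right_mem_Icc.2 h) h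

lemma JBC_eq (β : ℝ) {z : ℝ} (hz : z ∈ Set.Ioo (-1:ℝ) 1) :
    JBC β z = tstar β z * z - cBC β (tstar β z) := by
  have hb : ∀ t : ℝ, t * z - cBC β t ≤ tstar β z * z - cBC β (tstar β z) := phi_le β hz
  apply le_antisymm
  · exact ciSup_le hb
  · exact le_ciSup ⟨_, Set.forall_mem_range.2 hb⟩ (tstar β z)

lemma differentiableAt_tstar (β : ℝ) {z : ℝ} (hz : z ∈ Set.Ioo (-1:ℝ) 1) :
    DifferentiableAt ℝ (tstar β) z := by
  have hq := qf_pos β hz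
  have hqd : DifferentiableAt ℝ (qf β) z := by
    unfold qf; fun_prop
  have hsd : DifferentiableAt ℝ (fun y => Real.sqrt (qf β y)) z :=
    ((Real.hasDerivAt_sqrt hq.ne').comp z hqd.hasDerivAt).differentiableAt
  have hnum : DifferentiableAt ℝ (fun y => y + Real.sqrt (qf β y)) z :=
    (differentiableAt_fun_id).add hsd
  have hden : DifferentiableAt ℝ (fun y : ℝ => 2 * EE β * (1 - y)) z := by fun_prop
  have hdiv : DifferentiableAt ℝ
      (fun y => (y + Real.sqrt (qf β y)) / (2 * EE β * (1 - y))) z :=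
    hnum.div hden (den_pos β hz).ne'
  have hpos : (z + Real.sqrt (qf β z)) / (2 * EE β * (1 - z)) ≠ 0 :=
    (div_pos (num_pos β hz) (den_pos β hz)).ne'
  exact hdiv.log hpos

lemma hasDerivAt_JBC (β : ℝ) {z : ℝ} (hz : z ∈ Set.Ioo (-1:ℝ) 1) :
    HasDerivAt (JBC β) (tstar β z) z := by
  have hts := (differentiableAt_tstar β hz).hasDerivAt
  set d := deriv (tstar β) z with hd
  have hJexp : HasDerivAt (fun y => tstar β y * y - cBC β (tstar β y))
      (d * z + tstar β z * 1 - c1 β (tstar β z) * d) z := by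
    exact (hts.mul (hasDerivAt_id z)).sub ((hasDerivAt_cBC β (tstar β z)).comp z hts)
  rw [c1_tstar β hz] at hJexp
  have heq : JBC β =ᶠ[nhds z] fun y => tstar β y * y - cBC β (tstar β y) := by
    filter_upwards [Ioo_mem_nhds hz.1 hz.2] with y hy
    exact JBC_eq β hy
  have := hJexp.congr_of_eventuallyEq heq
  refine this.congr_deriv ?_
  ring

lemma tstar_deriv_mul (β : ℝ) {z : ℝ} (hz : z ∈ Set.Ioo (-1:ℝ) 1) :
    c2 β (tstar β z) * deriv (tstar β) z = 1 := by
  have hts := (differentiableAt_tstar β hz).hasDerivAt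
  have hcomp : HasDerivAt (fun y => c1 β (tstar β y))
      (c2 β (tstar β z) * deriv (tstar β) z) z :=
    (hasDerivAt_c1 β (tstar β z)).comp z hts
  have heq : (fun y => c1 β (tstar β y)) =ᶠ[nhds z] id := by
    filter_upwards [Ioo_mem_nhds hz.1 hz.2] with y hy
    exact c1_tstar β hy
  have hid : HasDerivAt (id : ℝ → ℝ) (c2 β (tstar β z) * deriv (tstar β) z) z :=
    hcomp.congr_of_eventuallyEq heq.symm
  exact hid.unique (hasDerivAt_id z)

lemma isLocalMin_of_deriv_pos (f : ℝ → ℝ) (z c : ℝ) (hc : 0 < c)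
    (hd : ∀ᶠ y in nhds z, DifferentiableAt ℝ f y)
    (h0 : deriv f z = 0) (h2 : HasDerivAt (deriv f) c z) :
    IsLocalMin f z := by
  have hslope : ∀ᶠ y in nhdsWithin z {z}ᶜ, 0 < slope (deriv f) z y :=
    (hasDerivAt_iff_tendsto_slope.1 h2).eventually (eventually_gt_nhds hc)
  rw [eventually_nhdsWithin_iff] at hslope
  rcases Metric.eventually_nhds_iff.1 hd with ⟨ε₁, hε₁, hd'⟩
  rcases Metric.eventually_nhds_iff.1 hslope with ⟨ε₂, hε₂, hs'⟩
  set r := min ε₁ ε₂ / 2 with hrdef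
  have hr : 0 < r := by positivity
  have hrε₁ : r < ε₁ := by
    have := min_le_left ε₁ ε₂; simp only [hrdef]; linarith [min_le_left ε₁ ε₂]
  have hrε₂ : r < ε₂ := by
    simp only [hrdef]; linarith [min_le_right ε₁ ε₂]
  have hmem : ∀ x ∈ Set.Icc (z - r) (z + r), dist x z < ε₁ := by
    intro x hx
    rw [Real.dist_eq, abs_lt]
    constructor <;> [linarith [hx.1]; linarith [hx.2]]
  have hderiv_sign : ∀ x, x ≠ z → dist x z < ε₂ →
      0 < deriv f x / (x - z) := by
    intro x hxz hxd
    have := hs' hxd (by simpa using hxz)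
    rwa [slope_def_field, h0, sub_zero] at this
  have hmono : MonotoneOn f (Set.Icc z (z + r)) := by
    apply monotoneOn_of_deriv_nonneg (convex_Icc _ _)
    · intro x hx
      have hx' : x ∈ Set.Icc (z - r) (z + r) := ⟨by linarith [hx.1], hx.2⟩
      exact (hd' (hmem x hx')).continuousAt.continuousWithinAt
    · intro x hx
      rw [interior_Icc] at hx
      have hx' : x ∈ Set.Icc (z - r) (z + r) := ⟨by linarith [hx.1.le], hx.2.le⟩
      exact (hd' (hmem x hx')).differentiableWithinAt
    · intro x hx
      rw [interior_Icc] at hx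
      have hxz : x ≠ z := ne_of_gt hx.1
      have hxd : dist x z < ε₂ := by
        rw [Real.dist_eq, abs_lt]; constructor <;> [linarith [hx.1]; linarith [hx.2]]
      have h := hderiv_sign x hxz hxd
      have hxz' : 0 < x - z := by linarith [hx.1]
      have := mul_pos h hxz'
      rw [div_mul_cancel₀ _ hxz'.ne'] at this
      exact this.le
  have hanti : AntitoneOn f (Set.Icc (z - r) z) := by
    apply antitoneOn_of_deriv_nonpos (convex_Icc _ _)
    · intro x hx
      have hx' : x ∈ Set.Icc (z - r) (z + r) := ⟨hx.1, by linarith [hx.2]⟩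
      exact (hd' (hmem x hx')).continuousAt.continuousWithinAt
    · intro x hx
      rw [interior_Icc] at hx
      have hx' : x ∈ Set.Icc (z - r) (z + r) := ⟨hx.1.le, by linarith [hx.2.le]⟩
      exact (hd' (hmem x hx')).differentiableWithinAt
    · intro x hx
      rw [interior_Icc] at hx
      have hxz : x ≠ z := ne_of_lt hx.2
      have hxd : dist x z < ε₂ := by
        rw [Real.dist_eq, abs_lt]; constructor <;> [linarith [hx.1]; linarith [hx.2]]
      have h := hderiv_sign x hxz hxd
      have hxz' : x - z < 0 := by linarith [hx.2]
      by_contra hcon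
      push_neg at hcon
      have : deriv f x / (x - z) ≤ 0 := div_nonpos_of_nonneg_of_nonpos hcon.le hxz'.le
      linarith
  rw [IsLocalMin, IsMinFilter]
  filter_upwards [Icc_mem_nhds (by linarith : z - r < z) (by linarith : z < z + r)] with y hy
  rcases le_total y z with h | h
  · exact hanti ⟨hy.1, h⟩ (Set.right_mem_Icc.2 (by linarith)) h
  · exact hmono (Set.left_mem_Icc.2 (by linarith)) ⟨h, hy.2⟩ h

lemma hasDerivAt_lin (a y : ℝ) : HasDerivAt (fun y : ℝ => a * y) a y := by
  simpa using (hasDerivAt_id y).const_mul a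

lemma hasDerivAt_GBC (β K y : ℝ) :
    HasDerivAt (GBC β K) (2*β*K*y - c1 β (2*β*K*y) * (2*β*K)) y := by
  have h1 : HasDerivAt (fun y : ℝ => β*K*y^2) (2*β*K*y) y := by
    have := (hasDerivAt_pow 2 y).const_mul (β*K)
    refine this.congr_deriv ?_
    ring
  have h2 : HasDerivAt (fun y : ℝ => 2*β*K*y) (2*β*K) y := hasDerivAt_lin _ y
  have h3 := (hasDerivAt_cBC β (2*β*K*y)).comp y h2
  exact h1.sub h3

lemma deriv_GBC (β K : ℝ) :
    deriv (GBC β K) = fun y => 2*β*K*y - c1 β (2*β*K*y) * (2*β*K) :=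
  funext fun y => (hasDerivAt_GBC β K y).deriv

lemma hasDerivAt_deriv_GBC (β K z : ℝ) :
    HasDerivAt (deriv (GBC β K)) (2*β*K - c2 β (2*β*K*z) * (2*β*K) * (2*β*K)) z := by
  rw [deriv_GBC]
  have h2 : HasDerivAt (fun y : ℝ => 2*β*K*y) (2*β*K) z := hasDerivAt_lin _ z
  have h3 := ((hasDerivAt_c1 β (2*β*K*z)).comp z h2).mul_const (2*β*K)
  exact h2.sub h3

lemma deriv2_GBC (β K z : ℝ) :
    deriv (deriv (GBC β K)) z = 2*β*K - c2 β (2*β*K*z) * (2*β*K) * (2*β*K) :=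
  (hasDerivAt_deriv_GBC β K z).deriv

lemma hasDerivAt_IBC (β K : ℝ) {y : ℝ} (hy : y ∈ Set.Ioo (-1:ℝ) 1) :
    HasDerivAt (IBC β K) (tstar β y - 2*β*K*y) y := by
  have h1 : HasDerivAt (fun y : ℝ => β*K*y^2) (2*β*K*y) y := by
    have := (hasDerivAt_pow 2 y).const_mul (β*K)
    refine this.congr_deriv ?_
    ring
  have h := ((hasDerivAt_JBC β hy).sub h1).sub_const
    (sInf ((fun y => JBC β y - β * K * y ^ 2) '' Set.Icc (-1 : ℝ) 1))
  exact h

lemma deriv_IBC_eventually (β K : ℝ) {z : ℝ} (hz : z ∈ Set.Ioo (-1:ℝ) 1) :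
    deriv (IBC β K) =ᶠ[nhds z] fun y => tstar β y - 2*β*K*y := by
  filter_upwards [Ioo_mem_nhds hz.1 hz.2] with y hy
  exact (hasDerivAt_IBC β K hy).deriv

lemma hasDerivAt_deriv_IBC (β K : ℝ) {z : ℝ} (hz : z ∈ Set.Ioo (-1:ℝ) 1) :
    HasDerivAt (deriv (IBC β K)) (deriv (tstar β) z - 2*β*K) z := by
  have hts := (differentiableAt_tstar β hz).hasDerivAt
  have h := hts.sub (hasDerivAt_lin (2*β*K) z)
  exact h.congr_of_eventuallyEq (deriv_IBC_eventually β K hz)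

lemma deriv2_IBC (β K : ℝ) {z : ℝ} (hz : z ∈ Set.Ioo (-1:ℝ) 1) :
    deriv (deriv (IBC β K)) z = deriv (tstar β) z - 2*β*K :=
  (hasDerivAt_deriv_IBC β K hz).deriv

end BCaux

open BCaux

/-- **Local minimum points of `G_{β,K}` and `I_{β,K}` coincide** (Lemma 5.5 in the
survey): for `z̃ ∈ (−1,1)`, `z̃` is a local minimum point of `G_{β,K}` with
`G_{β,K}″(z̃) > 0` if and only if `z̃` is a local minimum point of `I_{β,K}` with
`I_{β,K}″(z̃) > 0`. -/
theorem blume_capel_local_min_equiv (β K : ℝ) (hβ : 0 < β) (hK : 0 < K)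
    (z : ℝ) (hz : z ∈ Set.Ioo (-1 : ℝ) 1) :
    (IsLocalMin (GBC β K) z ∧ 0 < deriv (deriv (GBC β K)) z) ↔
    (IsLocalMin (IBC β K) z ∧ 0 < deriv (deriv (IBC β K)) z) := by
  set m := 2*β*K with hm
  have hmpos : 0 < m := by positivity
  set w := tstar β z with hw
  set d := deriv (tstar β) z with hd
  have hmul : c2 β w * d = 1 := tstar_deriv_mul β hz
  have hc2w : 0 < c2 β w := c2_pos β w
  have hc1w : c1 β w = z := c1_tstar β hz
  have hdpos : 0 < d := by
    nlinarith [hmul, hc2w]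
  have hdiffI : ∀ᶠ y in nhds z, DifferentiableAt ℝ (IBC β K) y := by
    filter_upwards [Ioo_mem_nhds hz.1 hz.2] with y hy
    exact (hasDerivAt_IBC β K hy).differentiableAt
  have hdiffG : ∀ᶠ y in nhds z, DifferentiableAt ℝ (GBC β K) y := by
    filter_upwards with y
    exact (hasDerivAt_GBC β K y).differentiableAt
  constructor
  · rintro ⟨hmin, h2⟩
    have hG0 : deriv (GBC β K) z = 0 := hmin.deriv_eq_zero
    rw [(hasDerivAt_GBC β K z).deriv] at hG0
    rw [← hm] at hG0
    have hc1a : c1 β (m*z) = z := by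
      have h' : c1 β (m*z) * m = z * m := by linarith [hG0]
      exact mul_right_cancel₀ hmpos.ne' h'
    have hwa : w = m*z := c1_strictMono β |>.injective (by rw [hc1w, hc1a])
    rw [deriv2_GBC, ← hm] at h2
    have hc2a : c2 β (m*z) * m < 1 := by nlinarith [h2, hmpos]
    have hdm : m < d := by
      rw [hwa] at hmul hc2w
      nlinarith [hmul, hc2a, hc2w]
    have hI0 : deriv (IBC β K) z = 0 := by
      rw [(hasDerivAt_IBC β K hz).deriv, ← hw, hwa]
      ring
    have hI2 : HasDerivAt (deriv (IBC β K)) (d - m) z := hasDerivAt_deriv_IBC β K hz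
    refine ⟨isLocalMin_of_deriv_pos _ z (d - m) (by linarith) hdiffI hI0 hI2, ?_⟩
    rw [deriv2_IBC β K hz]
    linarith
  · rintro ⟨hmin, h2⟩
    have hI0 : deriv (IBC β K) z = 0 := hmin.deriv_eq_zero
    rw [(hasDerivAt_IBC β K hz).deriv, ← hm] at hI0
    have hwa : w = m*z := by rw [hw]; linarith [hI0]
    have hc1a : c1 β (m*z) = z := by rw [← hwa, hc1w]
    rw [deriv2_IBC β K hz, ← hm] at h2
    have hdm : m < d := by rw [hd]; linarith [h2]
    have hc2a : c2 β (m*z) * m < 1 := by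
      rw [hwa] at hmul hc2w
      nlinarith [hmul, hc2w]
    have hG0 : deriv (GBC β K) z = 0 := by
      rw [(hasDerivAt_GBC β K z).deriv, ← hm, hc1a]
      ring
    have hG2 : HasDerivAt (deriv (GBC β K)) (m - c2 β (m*z) * m * m) z := by
      have := hasDerivAt_deriv_GBC β K z
      rwa [← hm] at this
    have hG2pos : 0 < m - c2 β (m*z) * m * m := by nlinarith [hc2a]
    refine ⟨isLocalMin_of_deriv_pos _ z _ hG2pos hdiffG hG0 hG2, ?_⟩
    rw [deriv2_GBC β K z, ← hm]
    nlinarith [hc2a]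


end
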